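/- arXiv:2406.17251 — 2 statements merged into one kernel-verified Lean document; each statement's English description precedes it below -/
import Mathlib

section
/- If (b₁,d₁) and (b₂,d₂) satisfy b₁ < d₁, b₂ < d₂, then the sup-norm distance between their tent functions satisfies sup_t |Λ₁(t) − Λ₂(t)| ≤ max(|b₁ − b₂|, |d₁ − d₂|). -/
theorem tent_dist_le_linfty (b₁ d₁ b₂ d₂ : ℝ) (h₁ : b₁ < d₁) (h₂ : b₂ < d₂) (t : ℝ) :
    |max 0 (min (t - b₁) (d₁ - t)) - max 0 (min (t - b₂) (d₂ - t))| ≤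
      max |b₁ - b₂| |d₁ - d₂| := by
  have h1 := abs_max_sub_max_le_max (0:ℝ) (min (t - b₁) (d₁ - t)) 0 (min (t - b₂) (d₂ - t))
  refine h1.trans ?_
  simp only [sub_zero, sub_self, abs_zero, max_le_iff]
  constructor
  · positivity
  have h2 := abs_min_sub_min_le_max (t - b₁) (d₁ - t) (t - b₂) (d₂ - t)
  refine h2.trans ?_
  have e1 : t - b₁ - (t - b₂) = -(b₁ - b₂) := by ring
  have e2 : d₁ - t - (d₂ - t) = d₁ - d₂ := by ring
  rw [e1, e2, abs_neg]
end

section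
/- For b < d and 1 ≤ p < ∞, the L^p norm of the tent function Λ_{(b,d)} equals ((d−b)/2)^{1 + 1/p} · (2/(p+1))^{1/p}. -/
open Real in
theorem tent_lp_norm (b d : ℝ) (hbd : b < d) (p : ℝ) (hp : 1 ≤ p) :
    (∫ t : ℝ, (max 0 (min (t - b) (d - t))) ^ p) ^ (1 / p)
      = ((d - b) / 2) ^ (1 + 1 / p) * (2 / (p + 1)) ^ (1 / p) := by
  have hp0 : (0:ℝ) < p := lt_of_lt_of_le one_pos hp
  have hp1 : (0:ℝ) < p + 1 := by linarith
  set f : ℝ → ℝ := fun t => (max 0 (min (t - b) (d - t))) ^ p with hf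
  set m : ℝ := (b + d) / 2 with hm
  set h : ℝ := (d - b) / 2 with hh
  have hpos : 0 < h := by simp [hh]; linarith
  have hbm : b ≤ m := by simp [hm]; linarith
  have hmd : m ≤ d := by simp [hm]; linarith
  -- restrict to [b,d]
  have hzero : ∀ x, x ∉ Set.Ioc b d → f x = 0 := by
    intro x hx
    simp only [Set.mem_Ioc, not_and_or, not_lt, not_le] at hx
    have : max 0 (min (x - b) (d - x)) = 0 := by
      rcases hx with hx | hx
      · have : min (x - b) (d - x) ≤ x - b := min_le_left _ _
        have : min (x - b) (d - x) ≤ 0 := by linarith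
        exact max_eq_left this
      · have : min (x - b) (d - x) ≤ d - x := min_le_right _ _
        have : min (x - b) (d - x) ≤ 0 := by linarith
        exact max_eq_left this
    rw [hf]; simp only [this]
    exact Real.zero_rpow hp0.ne'
  have hcont : Continuous f :=
    (Real.continuous_rpow_const hp0.le).comp
      (continuous_const.max ((continuous_id.sub continuous_const).min
        (continuous_const.sub continuous_id)))
  have hint : (∫ t : ℝ, f t) = ∫ t in b..d, f t := by
    rw [intervalIntegral.integral_of_le hbd.le,
      MeasureTheory.setIntegral_eq_integral_of_forall_compl_eq_zero hzero]
  -- left piece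
  have hleft : (∫ t in b..m, f t) = ∫ x in (0:ℝ)..h, x ^ p := by
    have : (∫ t in b..m, f t) = ∫ t in b..m, (t - b) ^ p := by
      apply intervalIntegral.integral_congr
      intro t ht
      rw [Set.uIcc_of_le hbm] at ht
      obtain ⟨h1, h2⟩ := ht
      have hmin : min (t - b) (d - t) = t - b := by
        apply min_eq_left; simp [hm] at h2; linarith
      have hmax : max 0 (t - b) = t - b := max_eq_right (by linarith)
      rw [hf]; simp only [hmin, hmax]
    rw [this, intervalIntegral.integral_comp_sub_right (fun x => x ^ p) b]
    norm_num [hm, hh]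
    ring_nf
  -- right piece
  have hright : (∫ t in m..d, f t) = ∫ x in (0:ℝ)..h, x ^ p := by
    have : (∫ t in m..d, f t) = ∫ t in m..d, (d - t) ^ p := by
      apply intervalIntegral.integral_congr
      intro t ht
      rw [Set.uIcc_of_le hmd] at ht
      obtain ⟨h1, h2⟩ := ht
      have hmin : min (t - b) (d - t) = d - t := by
        apply min_eq_right; simp [hm] at h1; linarith
      have hmax : max 0 (d - t) = d - t := max_eq_right (by linarith)
      rw [hf]; simp only [hmin, hmax]
    rw [this, intervalIntegral.integral_comp_sub_left (fun x => x ^ p) d]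
    norm_num [hm, hh]
    ring_nf
  have hsplit : (∫ t in b..d, f t) = (∫ t in b..m, f t) + ∫ t in m..d, f t :=
    (intervalIntegral.integral_add_adjacent_intervals
      (hcont.intervalIntegrable _ _) (hcont.intervalIntegrable _ _)).symm
  have hval : (∫ x in (0:ℝ)..h, x ^ p) = h ^ (p + 1) / (p + 1) := by
    rw [integral_rpow (Or.inl (by linarith))]
    rw [Real.zero_rpow hp1.ne']
    ring
  have htotal : (∫ t : ℝ, f t) = h ^ (p + 1) * (2 / (p + 1)) := by
    rw [hint, hsplit, hleft, hright, hval]; ring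
  rw [htotal]
  rw [Real.mul_rpow (Real.rpow_nonneg hpos.le _) (by positivity)]
  rw [← Real.rpow_mul hpos.le]
  congr 2
  field_simp
end
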